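/- Let x_1,...,x_n be a median ordering of a tournament and suppose x_i → x_{i-2} is an edge, with 3 ≤ i ≤ n-2. Then each of x_{i-2}, x_{i-1}, x_i is an inneighbour of x_{i+1}, and at most one of x_{i-2}, x_{i-1}, x_i is an outneighbour of x_{i+2}. -/

import Mathlib

/-- A tournament: irreflexive, and exactly one direction between distinct vertices. -/
def IsTournament {V : Type*} (T : V → V → Prop) : Prop :=
  (∀ v : V, ¬ T v v) ∧ ∀ u v : V, u ≠ v → (T u v ↔ ¬ T v u)

/-- `T` contains the k-th power of a directed path on `L` vertices. -/
def ContainsPathPower {V : Type*} (T : V → V → Prop) (k L : ℕ) : Prop :=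
  ∃ v : Fin L → V, Function.Injective v ∧
    ∀ i j : Fin L, (i : ℕ) < (j : ℕ) → (j : ℕ) ≤ (i : ℕ) + k → T (v i) (v j)
/-- Number of forward edges of the ordering `x 0, x 1, ..., x (n-1)`. -/
def fwdCount {n : ℕ} (T : Fin n → Fin n → Prop) [DecidableRel T]
    (x : Equiv.Perm (Fin n)) : ℕ :=
  (Finset.univ.filter fun p : Fin n × Fin n => p.1 < p.2 ∧ T (x p.1) (x p.2)).card

/-- A median ordering maximizes the number of forward edges. -/
def IsMedianOrdering {n : ℕ} (T : Fin n → Fin n → Prop) [DecidableRel T]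
    (x : Equiv.Perm (Fin n)) : Prop :=
  ∀ y : Equiv.Perm (Fin n), fwdCount T y ≤ fwdCount T x

namespace MedianAux

open Finset

/-- Count of "forward" pairs for a boolean relation on `Fin 5`. -/
def countB (g : Fin 5 → Fin 5 → Bool) : ℕ :=
  (Finset.univ.filter fun p : Fin 5 × Fin 5 => p.1 < p.2 ∧ g p.1 p.2 = true).card

def gmat (b01 b02 b03 b04 b12 b13 b14 b23 b24 b34 : Bool) : Fin 5 → Fin 5 → Bool :=
  fun i j => ![![false, b01, b02, b03, b04],
               ![!b01, false, b12, b13, b14],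
               ![!b02, !b12, false, b23, b24],
               ![!b03, !b13, !b23, false, b34],
               ![!b04, !b14, !b24, !b34, false]] i j

def p1 : Equiv.Perm (Fin 5) := ⟨![1,2,3,0,4], ![3,0,1,2,4], by decide, by decide⟩
def p2 : Equiv.Perm (Fin 5) := ⟨![2,0,3,1,4], ![1,3,0,2,4], by decide, by decide⟩
def p3 : Equiv.Perm (Fin 5) := ⟨![0,1,3,2,4], ![0,1,3,2,4], by decide, by decide⟩
def p4 : Equiv.Perm (Fin 5) := ⟨![0,4,1,2,3], ![0,2,3,4,1], by decide, by decide⟩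
def p5 : Equiv.Perm (Fin 5) := ⟨![1,4,2,0,3], ![3,0,2,4,1], by decide, by decide⟩
def p6 : Equiv.Perm (Fin 5) := ⟨![2,4,0,1,3], ![2,3,0,4,1], by decide, by decide⟩

lemma finite_main : ∀ b01 b02 b03 b04 b12 b13 b14 b23 b24 b34 : Bool,
    gmat b01 b02 b03 b04 b12 b13 b14 b23 b24 b34 2 0 = true →
    (∀ τ : Equiv.Perm (Fin 5),
      countB (fun s t => gmat b01 b02 b03 b04 b12 b13 b14 b23 b24 b34 (τ s) (τ t)) ≤
      countB (gmat b01 b02 b03 b04 b12 b13 b14 b23 b24 b34)) →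
    (gmat b01 b02 b03 b04 b12 b13 b14 b23 b24 b34 0 3 = true ∧
     gmat b01 b02 b03 b04 b12 b13 b14 b23 b24 b34 1 3 = true ∧
     gmat b01 b02 b03 b04 b12 b13 b14 b23 b24 b34 2 3 = true) ∧
    (¬ (gmat b01 b02 b03 b04 b12 b13 b14 b23 b24 b34 4 0 = true ∧
        gmat b01 b02 b03 b04 b12 b13 b14 b23 b24 b34 4 1 = true) ∧
     ¬ (gmat b01 b02 b03 b04 b12 b13 b14 b23 b24 b34 4 0 = true ∧
        gmat b01 b02 b03 b04 b12 b13 b14 b23 b24 b34 4 2 = true) ∧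
     ¬ (gmat b01 b02 b03 b04 b12 b13 b14 b23 b24 b34 4 1 = true ∧
        gmat b01 b02 b03 b04 b12 b13 b14 b23 b24 b34 4 2 = true)) := by
  have key : ∀ b01 b02 b03 b04 b12 b13 b14 b23 b24 b34 : Bool,
      gmat b01 b02 b03 b04 b12 b13 b14 b23 b24 b34 2 0 = true →
      (countB (fun s t => gmat b01 b02 b03 b04 b12 b13 b14 b23 b24 b34 (p1 s) (p1 t)) ≤
        countB (gmat b01 b02 b03 b04 b12 b13 b14 b23 b24 b34)) →
      (countB (fun s t => gmat b01 b02 b03 b04 b12 b13 b14 b23 b24 b34 (p2 s) (p2 t)) ≤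
        countB (gmat b01 b02 b03 b04 b12 b13 b14 b23 b24 b34)) →
      (countB (fun s t => gmat b01 b02 b03 b04 b12 b13 b14 b23 b24 b34 (p3 s) (p3 t)) ≤
        countB (gmat b01 b02 b03 b04 b12 b13 b14 b23 b24 b34)) →
      (countB (fun s t => gmat b01 b02 b03 b04 b12 b13 b14 b23 b24 b34 (p4 s) (p4 t)) ≤
        countB (gmat b01 b02 b03 b04 b12 b13 b14 b23 b24 b34)) →
      (countB (fun s t => gmat b01 b02 b03 b04 b12 b13 b14 b23 b24 b34 (p5 s) (p5 t)) ≤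
        countB (gmat b01 b02 b03 b04 b12 b13 b14 b23 b24 b34)) →
      (countB (fun s t => gmat b01 b02 b03 b04 b12 b13 b14 b23 b24 b34 (p6 s) (p6 t)) ≤
        countB (gmat b01 b02 b03 b04 b12 b13 b14 b23 b24 b34)) →
      (gmat b01 b02 b03 b04 b12 b13 b14 b23 b24 b34 0 3 = true ∧
       gmat b01 b02 b03 b04 b12 b13 b14 b23 b24 b34 1 3 = true ∧
       gmat b01 b02 b03 b04 b12 b13 b14 b23 b24 b34 2 3 = true) ∧
      (¬ (gmat b01 b02 b03 b04 b12 b13 b14 b23 b24 b34 4 0 = true ∧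
          gmat b01 b02 b03 b04 b12 b13 b14 b23 b24 b34 4 1 = true) ∧
       ¬ (gmat b01 b02 b03 b04 b12 b13 b14 b23 b24 b34 4 0 = true ∧
          gmat b01 b02 b03 b04 b12 b13 b14 b23 b24 b34 4 2 = true) ∧
       ¬ (gmat b01 b02 b03 b04 b12 b13 b14 b23 b24 b34 4 1 = true ∧
          gmat b01 b02 b03 b04 b12 b13 b14 b23 b24 b34 4 2 = true)) := by decide
  intro b01 b02 b03 b04 b12 b13 b14 b23 b24 b34 h20 hall
  exact key b01 b02 b03 b04 b12 b13 b14 b23 b24 b34 h20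
    (hall p1) (hall p2) (hall p3) (hall p4) (hall p5) (hall p6)

variable {n : ℕ}

/-- The embedding of the block of 5 consecutive positions. -/
def emb (a : ℕ) (ha : a + 4 < n) : Fin 5 ↪ Fin n :=
  ⟨fun s => ⟨a + s, by have := s.isLt; omega⟩, by
    intro s t h
    have : a + (s : ℕ) = a + (t : ℕ) := congrArg Fin.val h
    exact Fin.ext (by omega)⟩

lemma emb_val (a : ℕ) (ha : a + 4 < n) (s : Fin 5) : ((emb a ha s : Fin n) : ℕ) = a + s := rfl

lemma block_le (T : Fin n → Fin n → Prop) [DecidableRel T]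
    (x : Equiv.Perm (Fin n)) (hx : IsMedianOrdering T x)
    (a : ℕ) (ha : a + 4 < n) (τ : Equiv.Perm (Fin 5)) :
    countB (fun s t => decide (T (x (emb a ha (τ s))) (x (emb a ha (τ t))))) ≤
    countB (fun s t => decide (T (x (emb a ha s)) (x (emb a ha t)))) := by
  classical
  set ι := emb a ha with hι
  set σ : Equiv.Perm (Fin n) := τ.viaEmbedding ι with hσ
  have hx' : fwdCount T (σ.trans x) ≤ fwdCount T x := hx _
  -- basic facts about σ
  have hinB_iff : ∀ i : Fin n, i ∈ Set.range ι ↔ (a ≤ (i : ℕ) ∧ (i : ℕ) ≤ a + 4) := by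
    intro i
    constructor
    · rintro ⟨s, rfl⟩
      have := s.isLt
      simp only [hι, emb_val]
      omega
    · rintro ⟨h1, h2⟩
      exact ⟨⟨(i : ℕ) - a, by omega⟩, Fin.ext (by simp [hι, emb_val]; omega)⟩
  set inB : Fin n → Prop := fun i => a ≤ (i : ℕ) ∧ (i : ℕ) ≤ a + 4 with hinB
  have hfix : ∀ i : Fin n, ¬ inB i → σ i = i := by
    intro i hi
    exact Equiv.Perm.viaEmbedding_apply_of_notMem τ ι i (fun h => hi ((hinB_iff i).mp h))
  have hmapsto : ∀ π : Equiv.Perm (Fin n), (∀ i, ¬ inB i → π i = i) →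
      ∀ i, inB i → inB (π i) := by
    intro π hπ i hi
    by_contra hni
    have h1 : π (π i) = π i := hπ _ hni
    have : π i = i := π.injective h1
    rw [this] at hni
    exact hni hi
  have hfix' : ∀ i : Fin n, ¬ inB i → σ.symm i = i := by
    intro i hi
    have := hfix i hi
    conv_lhs => rw [← this]
    exact σ.symm_apply_apply i
  have hmono : ∀ π : Equiv.Perm (Fin n), (∀ i, ¬ inB i → π i = i) →
      ∀ p1 p2 : Fin n, p1 < p2 → ¬ (inB p1 ∧ inB p2) → π p1 < π p2 := by
    intro π hπ q1 q2 hlt hq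
    have hmt := hmapsto π hπ
    by_cases h1 : inB q1
    · have h2 : ¬ inB q2 := fun h2 => hq ⟨h1, h2⟩
      have e2 : π q2 = q2 := hπ _ h2
      have hb1 : inB (π q1) := hmt _ h1
      rw [Fin.lt_def] at hlt ⊢
      rw [e2]
      simp only [hinB] at h1 h2 hb1
      omega
    · by_cases h2 : inB q2
      · have e1 : π q1 = q1 := hπ _ h1
        have hb2 : inB (π q2) := hmt _ h2
        rw [Fin.lt_def] at hlt ⊢
        rw [e1]
        simp only [hinB] at h1 h2 hb2
        omega
      · rw [hπ _ h1, hπ _ h2]; exact hlt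
  -- decompose fwdCount
  have hdecomp : ∀ z : Equiv.Perm (Fin n),
      fwdCount T z =
        ((Finset.univ.filter fun p : Fin n × Fin n =>
            (p.1 < p.2 ∧ T (z p.1) (z p.2)) ∧ (inB p.1 ∧ inB p.2)).card) +
        ((Finset.univ.filter fun p : Fin n × Fin n =>
            (p.1 < p.2 ∧ T (z p.1) (z p.2)) ∧ ¬ (inB p.1 ∧ inB p.2)).card) := by
    intro z
    rw [fwdCount]
    rw [← Finset.card_filter_add_card_filter_not
      (s := Finset.univ.filter fun p : Fin n × Fin n => p.1 < p.2 ∧ T (z p.1) (z p.2))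
      (fun p : Fin n × Fin n => inB p.1 ∧ inB p.2)]
    rw [Finset.filter_filter, Finset.filter_filter]
  -- the outside parts are equal
  have hout :
      (Finset.univ.filter fun p : Fin n × Fin n =>
          (p.1 < p.2 ∧ T ((σ.trans x) p.1) ((σ.trans x) p.2)) ∧ ¬ (inB p.1 ∧ inB p.2)).card =
      (Finset.univ.filter fun p : Fin n × Fin n =>
          (p.1 < p.2 ∧ T (x p.1) (x p.2)) ∧ ¬ (inB p.1 ∧ inB p.2)).card := by
    apply Finset.card_bij' (i := fun p _ => (σ p.1, σ p.2))
      (j := fun p _ => (σ.symm p.1, σ.symm p.2))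
    · intro p hp
      simp only [Finset.mem_filter, Finset.mem_univ, true_and] at hp ⊢
      obtain ⟨⟨hlt, hT⟩, hq⟩ := hp
      refine ⟨⟨hmono σ hfix _ _ hlt hq, hT⟩, ?_⟩
      rintro ⟨hb1, hb2⟩
      apply hq
      have k1 := hmapsto σ.symm hfix' _ hb1
      have k2 := hmapsto σ.symm hfix' _ hb2
      rw [σ.symm_apply_apply] at k1 k2
      exact ⟨k1, k2⟩
    · intro p hp
      simp only [Finset.mem_filter, Finset.mem_univ, true_and] at hp ⊢
      obtain ⟨⟨hlt, hT⟩, hq⟩ := hp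
      refine ⟨⟨hmono σ.symm hfix' _ _ hlt hq, ?_⟩, ?_⟩
      · simpa only [Equiv.trans_apply, σ.apply_symm_apply] using hT
      · rintro ⟨hb1, hb2⟩
        apply hq
        have k1 := hmapsto σ hfix _ hb1
        have k2 := hmapsto σ hfix _ hb2
        rw [σ.apply_symm_apply] at k1 k2
        exact ⟨k1, k2⟩
    · intro p _; simp
    · intro p _; simp
  -- the inside parts are the countB's
  have hin : ∀ z : Equiv.Perm (Fin n),
      (Finset.univ.filter fun p : Fin n × Fin n =>
          (p.1 < p.2 ∧ T (z p.1) (z p.2)) ∧ (inB p.1 ∧ inB p.2)).card =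
      countB (fun s t => decide (T (z (ι s)) (z (ι t)))) := by
    intro z
    rw [countB]
    apply Finset.card_bij'
      (i := fun (p : Fin n × Fin n) hp => ((⟨(p.1 : ℕ) - a, by
          simp only [Finset.mem_filter, hinB] at hp; omega⟩ : Fin 5),
        (⟨(p.2 : ℕ) - a, by
          simp only [Finset.mem_filter, hinB] at hp; omega⟩ : Fin 5)))
      (j := fun (q : Fin 5 × Fin 5) _ => (ι q.1, ι q.2))
    case hi =>
      intro p hp
      simp only [Finset.mem_filter, Finset.mem_univ, true_and, hinB] at hp ⊢
      obtain ⟨⟨hlt, hT⟩, hb1, hb2⟩ := hp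
      rw [Fin.lt_def] at hlt
      constructor
      · rw [Fin.lt_def]; simp; omega
      · have e1 : ι ⟨(p.1 : ℕ) - a, by omega⟩ = p.1 := Fin.ext (by simp [hι, emb_val]; omega)
        have e2 : ι ⟨(p.2 : ℕ) - a, by omega⟩ = p.2 := Fin.ext (by simp [hι, emb_val]; omega)
        rw [e1, e2]
        exact decide_eq_true hT
    case hj =>
      intro q hq
      simp only [Finset.mem_filter, Finset.mem_univ, true_and, hinB] at hq ⊢
      obtain ⟨hlt, hT⟩ := hq
      rw [Fin.lt_def] at hlt
      have h1 := q.1.isLt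
      have h2 := q.2.isLt
      refine ⟨⟨?_, of_decide_eq_true hT⟩, ?_, ?_⟩
      · rw [Fin.lt_def]; simp [hι, emb_val]; omega
      · simp [hι, emb_val]; omega
      · simp [hι, emb_val]; omega
    case left_inv =>
      intro p hp
      simp only [Finset.mem_filter, hinB] at hp
      refine Prod.ext (Fin.ext ?_) (Fin.ext ?_) <;> simp [hι, emb_val] <;> omega
    case right_inv =>
      intro q _
      refine Prod.ext (Fin.ext ?_) (Fin.ext ?_) <;> simp [hι, emb_val]
  -- put it together
  rw [hdecomp (σ.trans x), hdecomp x, hout] at hx'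
  have hfinal := Nat.le_of_add_le_add_right hx'
  rw [hin (σ.trans x), hin x] at hfinal
  have hrw : (fun s t => decide (T ((σ.trans x) (ι s)) ((σ.trans x) (ι t)))) =
      (fun s t => decide (T (x (ι (τ s))) (x (ι (τ t))))) := by
    funext s t
    simp only [Equiv.trans_apply, hσ, Equiv.Perm.viaEmbedding_apply]
  rw [hrw] at hfinal
  exact hfinal

end MedianAux

theorem median_triple {n : ℕ} (T : Fin n → Fin n → Prop) [DecidableRel T]
    (hT : IsTournament T) (x : Equiv.Perm (Fin n)) (hx : IsMedianOrdering T x)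
    (a : ℕ) (ha : a + 4 < n)
    (hedge : T (x ⟨a + 2, by omega⟩) (x ⟨a, by omega⟩)) :
    (T (x ⟨a, by omega⟩) (x ⟨a + 3, by omega⟩) ∧
     T (x ⟨a + 1, by omega⟩) (x ⟨a + 3, by omega⟩) ∧
     T (x ⟨a + 2, by omega⟩) (x ⟨a + 3, by omega⟩)) ∧
    (¬ (T (x ⟨a + 4, ha⟩) (x ⟨a, by omega⟩) ∧ T (x ⟨a + 4, ha⟩) (x ⟨a + 1, by omega⟩)) ∧
     ¬ (T (x ⟨a + 4, ha⟩) (x ⟨a, by omega⟩) ∧ T (x ⟨a + 4, ha⟩) (x ⟨a + 2, by omega⟩)) ∧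
     ¬ (T (x ⟨a + 4, ha⟩) (x ⟨a + 1, by omega⟩) ∧ T (x ⟨a + 4, ha⟩) (x ⟨a + 2, by omega⟩))) := by
  classical
  open MedianAux in
  set ι := MedianAux.emb (n := n) a ha with hι
  set f : Fin 5 → Fin 5 → Bool := fun s t => decide (T (x (ι s)) (x (ι t))) with hf
  have hval : ∀ s : Fin 5, x (ι s) = x ⟨a + (s : ℕ), by have := s.isLt; omega⟩ := fun s => rfl
  have hne : ∀ s t : Fin 5, s ≠ t → x (ι s) ≠ x (ι t) := by
    intro s t hst h
    exact hst (ι.injective (x.injective h))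
  have hanti : ∀ s t : Fin 5, s ≠ t → f t s = !f s t := by
    intro s t hst
    have := (hT.2 _ _ (hne t s (Ne.symm hst)))
    simp only [hf, ← decide_not]
    exact decide_eq_decide.mpr this
  have hirr : ∀ s : Fin 5, f s s = false := by
    intro s
    simp only [hf]
    exact decide_eq_false (hT.1 _)
  have hfg : f = MedianAux.gmat (f 0 1) (f 0 2) (f 0 3) (f 0 4) (f 1 2) (f 1 3) (f 1 4)
      (f 2 3) (f 2 4) (f 3 4) := by
    funext s t
    fin_cases s <;> fin_cases t <;>
      simp only [MedianAux.gmat, Matrix.cons_val_zero, Matrix.cons_val_one, Matrix.head_cons,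
        Matrix.cons_val_two, Matrix.tail_cons, Matrix.cons_val_three, Matrix.cons_val_four,
        Matrix.head_fin_const] <;>
      first
        | rfl
        | exact hirr _
        | exact hanti _ _ (by decide)
  have hcount : ∀ τ : Equiv.Perm (Fin 5),
      MedianAux.countB (fun s t => f (τ s) (τ t)) ≤ MedianAux.countB f :=
    fun τ => MedianAux.block_le T x hx a ha τ
  rw [hfg] at hcount
  have h20 : MedianAux.gmat (f 0 1) (f 0 2) (f 0 3) (f 0 4) (f 1 2) (f 1 3) (f 1 4)
      (f 2 3) (f 2 4) (f 3 4) 2 0 = true := by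
    rw [← hfg]
    simp only [hf]
    exact decide_eq_true hedge
  have hmain := MedianAux.finite_main (f 0 1) (f 0 2) (f 0 3) (f 0 4) (f 1 2) (f 1 3) (f 1 4)
    (f 2 3) (f 2 4) (f 3 4) h20 hcount
  rw [← hfg] at hmain
  simp only [hf, decide_eq_true_eq] at hmain
  exact hmain
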